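/- Let (P, γ, I, ⋆) be a braided ABQR (associative, binary, quadratic, nonsymmetric) operad with dim P₂ = n admitting a coherent unit action (α, β) with α ≠ β. Then there is a basis {p₁,…,p_n} of P₂ with ⋆ = Σᵢ pᵢ such that the space Λ of quadratic relations of P is contained in the subspace of P₂^{⊗2} ⊕ P₂^{⊗2} spanned by: (⋆⊗p₂, p₂⊗p₂); (p₁⊗p₁, p₁⊗⋆); (pᵢ⊗p₁, pᵢ⊗p₁) for 2≤i≤n; (p₂⊗pⱼ, p₂⊗pⱼ) for 3≤j≤n; (p₁⊗pᵢ, pᵢ⊗p₂) for 3≤i≤n; (pᵢ⊗pⱼ, 0) and (0, pᵢ⊗pⱼ) for 3≤i,j≤n. Conversely, if Λ is contained in this span, the unit action determined by α, β with α(p₁)=β(p₂)=1 on the corresponding basis elements is coherent. -/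

import Mathlib

open TensorProduct

variable (k : Type*) [Field k] [CharZero k]
variable (V : Type*) [AddCommGroup V] [Module k V]

/-- `a ⊗ b ↦ f(a) • b`. -/
noncomputable def contrL (f : V →ₗ[k] k) : V ⊗[k] V →ₗ[k] V :=
  TensorProduct.lift ((LinearMap.lsmul k V) ∘ₗ f)

/-- `a ⊗ b ↦ f(b) • a`. -/
noncomputable def contrR (f : V →ₗ[k] k) : V ⊗[k] V →ₗ[k] V :=
  TensorProduct.lift ((LinearMap.lsmul k V) ∘ₗ f).flip

/-- `a ⊗ b ↦ f(a) * g(b)`. -/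
noncomputable def contrS (f g : V →ₗ[k] k) : V ⊗[k] V →ₗ[k] k :=
  (TensorProduct.lid k k).toLinearMap ∘ₗ TensorProduct.map f g

/-- The five coherence equations (C1)–(C5) of Theorem 4.1 for a relation pair
`(Σᵢ aᵢ ⊗ bᵢ, Σⱼ cⱼ ⊗ dⱼ) ∈ P₂^{⊗2} ⊕ P₂^{⊗2}`, expressed for the unit-action
maps `α, β : P₂ → k` and the associative element `⋆ = st`:
(C1) `Σ β(aᵢ)bᵢ = Σ β(cⱼ)dⱼ`; (C2) `Σ α(aᵢ)bᵢ = Σ β(dⱼ)cⱼ`;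
(C3) `Σ α(bᵢ)aᵢ = Σ α(dⱼ)cⱼ`; (C4) `Σ β(bᵢ)aᵢ = (Σ β(cⱼ)β(dⱼ)) ⋆`;
(C5) `(Σ α(aᵢ)α(bᵢ)) ⋆ = Σ α(cⱼ)dⱼ`. -/
noncomputable def Coherent (α β : V →ₗ[k] k) (st : V)
    (x : (V ⊗[k] V) × (V ⊗[k] V)) : Prop :=
  contrL k V β x.1 = contrL k V β x.2 ∧
  contrL k V α x.1 = contrR k V β x.2 ∧
  contrR k V α x.1 = contrR k V α x.2 ∧
  contrR k V β x.1 = contrS k V β β x.2 • st ∧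
  contrS k V α α x.1 • st = contrL k V α x.2

/-- The spanning set `λ'_{n,coh}` (Eq. (4.2)) of admissible quadratic relations
for a coherent unit action with `α ≠ β`, relative to a basis `p₁,…,pₙ` of `P₂`
with `⋆ = Σᵢ pᵢ` (indices here are `0`-based: `p₁ = p 0`, `p₂ = p 1`):
`(⋆⊗p₂, p₂⊗p₂)`; `(p₁⊗p₁, p₁⊗⋆)`; `(pᵢ⊗p₁, pᵢ⊗p₁)` for `2 ≤ i ≤ n`;
`(p₂⊗pⱼ, p₂⊗pⱼ)` for `3 ≤ j ≤ n`; `(p₁⊗pᵢ, pᵢ⊗p₂)` for `3 ≤ i ≤ n`;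
`(pᵢ⊗pⱼ, 0)`, `(0, pᵢ⊗pⱼ)` for `3 ≤ i, j ≤ n`. -/
def classSetNeq {n : ℕ} (hn : 2 ≤ n) (st : V) (p : Fin n → V) :
    Set ((V ⊗[k] V) × (V ⊗[k] V)) :=
  {x | x = (st ⊗ₜ[k] p ⟨1, by omega⟩,
            p ⟨1, by omega⟩ ⊗ₜ[k] p ⟨1, by omega⟩)
    ∨ x = (p ⟨0, by omega⟩ ⊗ₜ[k] p ⟨0, by omega⟩, p ⟨0, by omega⟩ ⊗ₜ[k] st)
    ∨ (∃ i : Fin n, 1 ≤ (i : ℕ) ∧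
        x = (p i ⊗ₜ[k] p ⟨0, by omega⟩, p i ⊗ₜ[k] p ⟨0, by omega⟩))
    ∨ (∃ j : Fin n, 2 ≤ (j : ℕ) ∧
        x = (p ⟨1, by omega⟩ ⊗ₜ[k] p j, p ⟨1, by omega⟩ ⊗ₜ[k] p j))
    ∨ (∃ i : Fin n, 2 ≤ (i : ℕ) ∧
        x = (p ⟨0, by omega⟩ ⊗ₜ[k] p i, p i ⊗ₜ[k] p ⟨1, by omega⟩))
    ∨ (∃ i j : Fin n, 2 ≤ (i : ℕ) ∧ 2 ≤ (j : ℕ) ∧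
        (x = (p i ⊗ₜ[k] p j, 0) ∨ x = (0, p i ⊗ₜ[k] p j)))}

set_option linter.unusedSectionVars false
set_option maxHeartbeats 1000000

@[simp] lemma contrL_tmul (f : V →ₗ[k] k) (a b : V) : contrL k V f (a ⊗ₜ[k] b) = f a • b := rfl
@[simp] lemma contrR_tmul (f : V →ₗ[k] k) (a b : V) : contrR k V f (a ⊗ₜ[k] b) = f b • a := rfl
@[simp] lemma contrS_tmul (f g : V →ₗ[k] k) (a b : V) : contrS k V f g (a ⊗ₜ[k] b) = f a * g b := by
  simp [contrS, TensorProduct.lid_tmul, smul_eq_mul]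

noncomputable def cohSub (α β : V →ₗ[k] k) (st : V) :
    Submodule k ((V ⊗[k] V) × (V ⊗[k] V)) :=
  LinearMap.ker (contrL k V β ∘ₗ LinearMap.fst k _ _ - contrL k V β ∘ₗ LinearMap.snd k _ _) ⊓
  LinearMap.ker (contrL k V α ∘ₗ LinearMap.fst k _ _ - contrR k V β ∘ₗ LinearMap.snd k _ _) ⊓
  LinearMap.ker (contrR k V α ∘ₗ LinearMap.fst k _ _ - contrR k V α ∘ₗ LinearMap.snd k _ _) ⊓
  LinearMap.ker (contrR k V β ∘ₗ LinearMap.fst k _ _ -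
    LinearMap.toSpanSingleton k V st ∘ₗ contrS k V β β ∘ₗ LinearMap.snd k _ _) ⊓
  LinearMap.ker (LinearMap.toSpanSingleton k V st ∘ₗ contrS k V α α ∘ₗ LinearMap.fst k _ _ -
    contrL k V α ∘ₗ LinearMap.snd k _ _)

lemma coherent_iff_mem (α β : V →ₗ[k] k) (st : V) (x : (V ⊗[k] V) × (V ⊗[k] V)) :
    Coherent k V α β st x ↔ x ∈ cohSub k V α β st := by
  simp [Coherent, cohSub, Submodule.mem_inf, LinearMap.mem_ker, sub_eq_zero,
    LinearMap.toSpanSingleton_apply, and_assoc]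

lemma coord_basis {n : ℕ} (p : Module.Basis (Fin n) k V) (i j : Fin n) :
    p.coord i (p j) = if j = i then 1 else 0 := by
  simp [Module.Basis.coord_apply, Finsupp.single_apply]

lemma coord_sum {n : ℕ} (p : Module.Basis (Fin n) k V) (i : Fin n) :
    p.coord i (∑ j, p j) = 1 := by
  rw [map_sum]
  simp [coord_basis, Finset.sum_ite_eq']

lemma gens_coherent {n : ℕ} (hn : 2 ≤ n) (st : V) (p : Module.Basis (Fin n) k V)
    (hst : st = ∑ i, p i) :
    ∀ x ∈ classSetNeq k V hn st (⇑p),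
      Coherent k V (p.coord ⟨0, by omega⟩) (p.coord ⟨1, by omega⟩) st x := by
  set i0 : Fin n := ⟨0, by omega⟩
  set i1 : Fin n := ⟨1, by omega⟩
  have c00 : p.coord i0 (p i0) = 1 := by simp [coord_basis]
  have c11 : p.coord i1 (p i1) = 1 := by simp [coord_basis]
  have c01 : p.coord i1 (p i0) = 0 := by
    rw [coord_basis, if_neg]; simp [i0, i1, Fin.ext_iff]
  have c10 : p.coord i0 (p i1) = 0 := by
    rw [coord_basis, if_neg]; simp [i0, i1, Fin.ext_iff]
  have cs0 : p.coord i0 st = 1 := by rw [hst]; exact coord_sum k V p i0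
  have cs1 : p.coord i1 st = 1 := by rw [hst]; exact coord_sum k V p i1
  rintro x (rfl | rfl | ⟨i, hi, rfl⟩ | ⟨j, hj, rfl⟩ | ⟨i, hi, rfl⟩ | ⟨i, j, hi, hj, (rfl|rfl)⟩)
  · unfold Coherent; simp only [i0, i1] at *; refine ⟨?_, ?_, ?_, ?_, ?_⟩ <;> simp [cs0, cs1, c00, c01, c10, c11, -Module.Basis.coord_apply]
  · unfold Coherent; simp only [i0, i1] at *; refine ⟨?_, ?_, ?_, ?_, ?_⟩ <;> simp [cs0, cs1, c00, c01, c10, c11, -Module.Basis.coord_apply]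
  · have h0 : p.coord i0 (p i) = 0 := by
      rw [coord_basis, if_neg]; intro h; rw [Fin.ext_iff] at h; simp [i0] at h; omega
    unfold Coherent; simp only [i0, i1] at *; refine ⟨?_, ?_, ?_, ?_, ?_⟩ <;> simp [cs0, cs1, c00, c01, c10, c11, h0, -Module.Basis.coord_apply]
  · have h0 : p.coord i0 (p j) = 0 := by
      rw [coord_basis, if_neg]; intro h; rw [Fin.ext_iff] at h; simp [i0] at h; omega
    have h1 : p.coord i1 (p j) = 0 := by
      rw [coord_basis, if_neg]; intro h; rw [Fin.ext_iff] at h; simp [i1] at h; omega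
    unfold Coherent; simp only [i0, i1] at *; refine ⟨?_, ?_, ?_, ?_, ?_⟩ <;> simp [cs0, cs1, c00, c01, c10, c11, h0, h1, -Module.Basis.coord_apply]
  · have h0 : p.coord i0 (p i) = 0 := by
      rw [coord_basis, if_neg]; intro h; rw [Fin.ext_iff] at h; simp [i0] at h; omega
    have h1 : p.coord i1 (p i) = 0 := by
      rw [coord_basis, if_neg]; intro h; rw [Fin.ext_iff] at h; simp [i1] at h; omega
    unfold Coherent; simp only [i0, i1] at *; refine ⟨?_, ?_, ?_, ?_, ?_⟩ <;> simp [cs0, cs1, c00, c01, c10, c11, h0, h1, -Module.Basis.coord_apply]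
  · have h0 : p.coord i0 (p i) = 0 := by
      rw [coord_basis, if_neg]; intro h; rw [Fin.ext_iff] at h; simp [i0] at h; omega
    have h1 : p.coord i1 (p i) = 0 := by
      rw [coord_basis, if_neg]; intro h; rw [Fin.ext_iff] at h; simp [i1] at h; omega
    have g0 : p.coord i0 (p j) = 0 := by
      rw [coord_basis, if_neg]; intro h; rw [Fin.ext_iff] at h; simp [i0] at h; omega
    have g1 : p.coord i1 (p j) = 0 := by
      rw [coord_basis, if_neg]; intro h; rw [Fin.ext_iff] at h; simp [i1] at h; omega
    unfold Coherent; simp only [i0, i1] at *; refine ⟨?_, ?_, ?_, ?_, ?_⟩ <;> simp [h0, h1, g0, g1, -Module.Basis.coord_apply]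
  · have h0 : p.coord i0 (p i) = 0 := by
      rw [coord_basis, if_neg]; intro h; rw [Fin.ext_iff] at h; simp [i0] at h; omega
    have h1 : p.coord i1 (p i) = 0 := by
      rw [coord_basis, if_neg]; intro h; rw [Fin.ext_iff] at h; simp [i1] at h; omega
    have g0 : p.coord i0 (p j) = 0 := by
      rw [coord_basis, if_neg]; intro h; rw [Fin.ext_iff] at h; simp [i0] at h; omega
    have g1 : p.coord i1 (p j) = 0 := by
      rw [coord_basis, if_neg]; intro h; rw [Fin.ext_iff] at h; simp [i1] at h; omega
    unfold Coherent; simp only [i0, i1] at *; refine ⟨?_, ?_, ?_, ?_, ?_⟩ <;> simp [h0, h1, g0, g1, -Module.Basis.coord_apply]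

lemma coord_st {n : ℕ} (p : Module.Basis (Fin n) k V) (st : V) (hst : st = ∑ i, p i) (i : Fin n) :
    p.coord i st = 1 := by rw [hst]; exact coord_sum k V p i

lemma keyL {n : ℕ} (p : Module.Basis (Fin n) k V) (i j : Fin n) (u : V ⊗[k] V) :
    p.coord j (contrL k V (p.coord i) u) = (p.tensorProduct p).repr u (i, j) := by
  induction u using TensorProduct.induction_on with
  | zero => simp
  | tmul a b => simp [Module.Basis.tensorProduct_repr_tmul_apply, Module.Basis.coord_apply, mul_comm]
  | add u v hu hv => simp [map_add, hu, hv]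
lemma keyR {n : ℕ} (p : Module.Basis (Fin n) k V) (i j : Fin n) (u : V ⊗[k] V) :
    p.coord i (contrR k V (p.coord j) u) = (p.tensorProduct p).repr u (i, j) := by
  induction u using TensorProduct.induction_on with
  | zero => simp
  | tmul a b => simp [Module.Basis.tensorProduct_repr_tmul_apply, Module.Basis.coord_apply, mul_comm]
  | add u v hu hv => simp [map_add, hu, hv]
lemma keyS {n : ℕ} (p : Module.Basis (Fin n) k V) (i j : Fin n) (u : V ⊗[k] V) :
    contrS k V (p.coord i) (p.coord j) u = (p.tensorProduct p).repr u (i, j) := by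
  induction u using TensorProduct.induction_on with
  | zero => simp
  | tmul a b => simp [Module.Basis.tensorProduct_repr_tmul_apply, Module.Basis.coord_apply, mul_comm]
  | add u v hu hv => simp [map_add, hu, hv]

lemma mem_span_of_coherent {n : ℕ} (hn : 2 ≤ n) (st : V) (p : Module.Basis (Fin n) k V)
    (hst : st = ∑ i, p i) (x : (V ⊗[k] V) × (V ⊗[k] V))
    (hx : Coherent k V (p.coord ⟨0, by omega⟩) (p.coord ⟨1, by omega⟩) st x) :
    x ∈ Submodule.span k (classSetNeq k V hn st (⇑p)) := by
  set i0 : Fin n := ⟨0, by omega⟩ with hi0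
  set i1 : Fin n := ⟨1, by omega⟩ with hi1
  set q := p.tensorProduct p with hq
  set A : Fin n × Fin n → k := fun z => q.repr x.1 z with hA
  set B : Fin n × Fin n → k := fun z => q.repr x.2 z with hB
  obtain ⟨h1, h2, h3, h4, h5⟩ := hx
  have cs : ∀ i : Fin n, p.coord i st = 1 := coord_st k V p st hst
  have e1 : ∀ j, A (i1, j) = B (i1, j) := by
    intro j; have := congrArg (p.coord j) h1
    rwa [keyL, keyL] at this
  have e2 : ∀ j, A (i0, j) = B (j, i1) := by
    intro j; have := congrArg (p.coord j) h2
    rwa [keyL, keyR] at this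
  have e3 : ∀ i, A (i, i0) = B (i, i0) := by
    intro i; have := congrArg (p.coord i) h3
    rwa [keyR, keyR] at this
  have e4 : ∀ i, A (i, i1) = B (i1, i1) := by
    intro i; have := congrArg (p.coord i) h4
    rwa [keyR, map_smul, keyS, smul_eq_mul, cs, mul_one] at this
  have e5 : ∀ j, A (i0, i0) = B (i0, j) := by
    intro j; have := congrArg (p.coord j) h5
    rwa [keyL, map_smul, keyS, smul_eq_mul, cs, mul_one] at this
  set y : (V ⊗[k] V) × (V ⊗[k] V) :=
    A (i1, i1) • (st ⊗ₜ[k] p i1, p i1 ⊗ₜ[k] p i1)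
    + A (i0, i0) • (p i0 ⊗ₜ[k] p i0, p i0 ⊗ₜ[k] st)
    + ∑ i : Fin n, (if 1 ≤ (i : ℕ) then A (i, i0) else 0)
        • (p i ⊗ₜ[k] p i0, p i ⊗ₜ[k] p i0)
    + ∑ j : Fin n, (if 2 ≤ (j : ℕ) then A (i1, j) else 0)
        • (p i1 ⊗ₜ[k] p j, p i1 ⊗ₜ[k] p j)
    + ∑ i : Fin n, (if 2 ≤ (i : ℕ) then A (i0, i) else 0)
        • (p i0 ⊗ₜ[k] p i, p i ⊗ₜ[k] p i1)
    + ∑ z : Fin n × Fin n, ((if 2 ≤ (z.1 : ℕ) ∧ 2 ≤ (z.2 : ℕ) then A z else 0)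
          • (p z.1 ⊗ₜ[k] p z.2, (0 : V ⊗[k] V))
        + (if 2 ≤ (z.1 : ℕ) ∧ 2 ≤ (z.2 : ℕ) then B z else 0)
          • ((0 : V ⊗[k] V), p z.1 ⊗ₜ[k] p z.2)) with hy
  have hymem : y ∈ Submodule.span k (classSetNeq k V hn st (⇑p)) := by
    refine Submodule.add_mem _ (Submodule.add_mem _ (Submodule.add_mem _ (Submodule.add_mem _
      (Submodule.add_mem _ ?_ ?_) ?_) ?_) ?_) ?_
    · exact Submodule.smul_mem _ _ (Submodule.subset_span (Or.inl rfl))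
    · exact Submodule.smul_mem _ _ (Submodule.subset_span (Or.inr (Or.inl rfl)))
    · refine Submodule.sum_mem _ fun i _ => ?_
      by_cases hi : 1 ≤ (i : ℕ)
      · exact Submodule.smul_mem _ _ (Submodule.subset_span
          (Or.inr (Or.inr (Or.inl ⟨i, hi, rfl⟩))))
      · rw [if_neg hi, zero_smul]; exact Submodule.zero_mem _
    · refine Submodule.sum_mem _ fun j _ => ?_
      by_cases hj : 2 ≤ (j : ℕ)
      · exact Submodule.smul_mem _ _ (Submodule.subset_span
          (Or.inr (Or.inr (Or.inr (Or.inl ⟨j, hj, rfl⟩)))))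
      · rw [if_neg hj, zero_smul]; exact Submodule.zero_mem _
    · refine Submodule.sum_mem _ fun i _ => ?_
      by_cases hi : 2 ≤ (i : ℕ)
      · exact Submodule.smul_mem _ _ (Submodule.subset_span
          (Or.inr (Or.inr (Or.inr (Or.inr (Or.inl ⟨i, hi, rfl⟩))))))
      · rw [if_neg hi, zero_smul]; exact Submodule.zero_mem _
    · refine Submodule.sum_mem _ fun z _ => ?_
      by_cases hz : 2 ≤ (z.1 : ℕ) ∧ 2 ≤ (z.2 : ℕ)
      · refine Submodule.add_mem _ ?_ ?_
        · exact Submodule.smul_mem _ _ (Submodule.subset_span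
            (Or.inr (Or.inr (Or.inr (Or.inr (Or.inr ⟨z.1, z.2, hz.1, hz.2, Or.inl rfl⟩))))))
        · exact Submodule.smul_mem _ _ (Submodule.subset_span
            (Or.inr (Or.inr (Or.inr (Or.inr (Or.inr ⟨z.1, z.2, hz.1, hz.2, Or.inr rfl⟩))))))
      · rw [if_neg hz, if_neg hz, zero_smul, zero_smul, add_zero]; exact Submodule.zero_mem _
  have qrep : ∀ (s t : Fin n) (z : Fin n × Fin n),
      q.repr (p s ⊗ₜ[k] p t) z = if (s, t) = z then 1 else 0 := by
    intro s t z
    rw [show p s ⊗ₜ[k] p t = q (s, t) from (Module.Basis.tensorProduct_apply' p p (s, t)).symm]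
    simp [Finsupp.single_apply]
  have qst1 : ∀ z1 z2 : Fin n,
      q.repr (st ⊗ₜ[k] p i1) (z1, z2) = if z2 = i1 then 1 else 0 := by
    intro z1 z2
    rw [hst, TensorProduct.sum_tmul, map_sum, Finset.sum_apply']
    simp only [qrep, Prod.mk.injEq, ite_and]
    rw [Finset.sum_ite_eq']
    simp [eq_comm]
  have qst2 : ∀ z1 z2 : Fin n,
      q.repr (p i0 ⊗ₜ[k] st) (z1, z2) = if z1 = i0 then 1 else 0 := by
    intro z1 z2
    rw [hst, TensorProduct.tmul_sum, map_sum, Finset.sum_apply']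
    have : ∀ i : Fin n, (if (i0, i) = (z1, z2) then (1:k) else 0)
        = if i = z2 then (if z1 = i0 then 1 else 0) else 0 := by
      intro i
      rcases eq_or_ne i z2 with rfl | h
      · simp [Prod.ext_iff, eq_comm, and_comm]
      · simp [Prod.ext_iff, h, Ne.symm h]
    simp only [qrep, this]
    rw [Finset.sum_ite_eq']
    simp
  have tri : ∀ w : Fin n, w = i0 ∨ w = i1 ∨ 2 ≤ (w : ℕ) := by
    intro w
    rcases Nat.lt_or_ge (w : ℕ) 2 with h | h
    · rcases Nat.lt_or_ge (w : ℕ) 1 with h2 | h2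
      · left; rw [Fin.ext_iff]; simpa [hi0] using by omega
      · right; left; rw [Fin.ext_iff]; simpa [hi1] using by omega
    · right; right; exact h
  have v0 : (i0 : ℕ) = 0 := rfl
  have v1 : (i1 : ℕ) = 1 := rfl
  have h01 : i0 ≠ i1 := by simp [hi0, hi1, Fin.ext_iff]
  have h10 : i1 ≠ i0 := by simp [hi0, hi1, Fin.ext_iff]
  have hAx : ∀ z : Fin n × Fin n, (q.repr x.1) z = A z := fun _ => rfl
  have hBx : ∀ z : Fin n × Fin n, (q.repr x.2) z = B z := fun _ => rfl
  have hxy : x = y := by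
    refine Prod.ext ?_ ?_
    · apply q.ext_elem; intro z
      obtain ⟨z1, z2⟩ := z
      rw [hy]
      simp only [Prod.fst_add, Prod.smul_fst, Prod.fst_sum, Prod.fst_zero,
        map_add, map_smul, map_sum, Finsupp.add_apply, Finsupp.smul_apply,
        Finsupp.coe_finset_sum, Finset.sum_apply, smul_eq_mul,
        qrep, qst1, qst2, map_zero, Finsupp.coe_zero, Pi.zero_apply, mul_zero, add_zero, hAx]
      rcases tri z1 with rfl | rfl | hz1 <;> rcases tri z2 with rfl | rfl | hz2
      · simp [Prod.mk.injEq, mul_ite, mul_one, mul_zero, ite_and, Finset.sum_ite_eq',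
          Prod.mk.eta, v0, v1, h01, h10]
      · simp [Prod.mk.injEq, mul_ite, mul_one, mul_zero, ite_and, Finset.sum_ite_eq',
          Prod.mk.eta, v0, v1, h01, h10, e4]
      · simp [Prod.mk.injEq, mul_ite, mul_one, mul_zero, ite_and, Finset.sum_ite_eq',
          Prod.mk.eta, v0, v1, h01, h10, hz2, Ne.symm (Fin.ne_of_val_ne (by omega : (z2:ℕ) ≠ (i0:ℕ))), Fin.ne_of_val_ne (by omega : (z2:ℕ) ≠ (i0:ℕ)), Ne.symm (Fin.ne_of_val_ne (by omega : (z2:ℕ) ≠ (i1:ℕ))), Fin.ne_of_val_ne (by omega : (z2:ℕ) ≠ (i1:ℕ))]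
      · simp [Prod.mk.injEq, mul_ite, mul_one, mul_zero, ite_and, Finset.sum_ite_eq',
          Prod.mk.eta, v0, v1, h01, h10]
      · simp [Prod.mk.injEq, mul_ite, mul_one, mul_zero, ite_and, Finset.sum_ite_eq',
          Prod.mk.eta, v0, v1, h01, h10]
      · simp [Prod.mk.injEq, mul_ite, mul_one, mul_zero, ite_and, Finset.sum_ite_eq',
          Prod.mk.eta, v0, v1, h01, h10, hz2, Ne.symm (Fin.ne_of_val_ne (by omega : (z2:ℕ) ≠ (i0:ℕ))), Fin.ne_of_val_ne (by omega : (z2:ℕ) ≠ (i0:ℕ)), Ne.symm (Fin.ne_of_val_ne (by omega : (z2:ℕ) ≠ (i1:ℕ))), Fin.ne_of_val_ne (by omega : (z2:ℕ) ≠ (i1:ℕ))]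
      · simp [Prod.mk.injEq, mul_ite, mul_one, mul_zero, ite_and, Finset.sum_ite_eq',
          Prod.mk.eta, v0, v1, h01, h10, (by omega : 1 ≤ (z1:ℕ)),
          Ne.symm (Fin.ne_of_val_ne (by omega : (z1:ℕ) ≠ (i0:ℕ))), Fin.ne_of_val_ne (by omega : (z1:ℕ) ≠ (i0:ℕ)), Ne.symm (Fin.ne_of_val_ne (by omega : (z1:ℕ) ≠ (i1:ℕ))), Fin.ne_of_val_ne (by omega : (z1:ℕ) ≠ (i1:ℕ))]
      · simp [Prod.mk.injEq, mul_ite, mul_one, mul_zero, ite_and, Finset.sum_ite_eq',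
          Prod.mk.eta, v0, v1, h01, h10, e4,
          Ne.symm (Fin.ne_of_val_ne (by omega : (z1:ℕ) ≠ (i0:ℕ))), Fin.ne_of_val_ne (by omega : (z1:ℕ) ≠ (i0:ℕ)), Ne.symm (Fin.ne_of_val_ne (by omega : (z1:ℕ) ≠ (i1:ℕ))), Fin.ne_of_val_ne (by omega : (z1:ℕ) ≠ (i1:ℕ))]
      · simp [Prod.mk.injEq, mul_ite, mul_one, mul_zero, ite_and, Finset.sum_ite_eq',
          Prod.mk.eta, v0, v1, h01, h10, hz1, hz2,
          Ne.symm (Fin.ne_of_val_ne (by omega : (z1:ℕ) ≠ (i0:ℕ))), Fin.ne_of_val_ne (by omega : (z1:ℕ) ≠ (i0:ℕ)), Ne.symm (Fin.ne_of_val_ne (by omega : (z1:ℕ) ≠ (i1:ℕ))), Fin.ne_of_val_ne (by omega : (z1:ℕ) ≠ (i1:ℕ)),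
          Ne.symm (Fin.ne_of_val_ne (by omega : (z2:ℕ) ≠ (i0:ℕ))), Fin.ne_of_val_ne (by omega : (z2:ℕ) ≠ (i0:ℕ)), Ne.symm (Fin.ne_of_val_ne (by omega : (z2:ℕ) ≠ (i1:ℕ))), Fin.ne_of_val_ne (by omega : (z2:ℕ) ≠ (i1:ℕ))]
    · apply q.ext_elem; intro z
      obtain ⟨z1, z2⟩ := z
      rw [hy]
      simp only [Prod.snd_add, Prod.smul_snd, Prod.snd_sum, Prod.snd_zero,
        map_add, map_smul, map_sum, Finsupp.add_apply, Finsupp.smul_apply,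
        Finsupp.coe_finset_sum, Finset.sum_apply, smul_eq_mul,
        qrep, qst1, qst2, map_zero, Finsupp.coe_zero, Pi.zero_apply, mul_zero, add_zero, hBx]
      rcases tri z1 with rfl | rfl | hz1 <;> rcases tri z2 with rfl | rfl | hz2
      · simp [Prod.mk.injEq, mul_ite, mul_one, mul_zero, ite_and, Finset.sum_ite_eq',
          Prod.mk.eta, v0, v1, h01, h10, ← e5]
      · simp [Prod.mk.injEq, mul_ite, mul_one, mul_zero, ite_and, Finset.sum_ite_eq',
          Prod.mk.eta, v0, v1, h01, h10, ← e5]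
      · simp [Prod.mk.injEq, mul_ite, mul_one, mul_zero, ite_and, Finset.sum_ite_eq',
          Prod.mk.eta, v0, v1, h01, h10, ← e5, hz2,
          Ne.symm (Fin.ne_of_val_ne (by omega : (z2:ℕ) ≠ (i0:ℕ))), Fin.ne_of_val_ne (by omega : (z2:ℕ) ≠ (i0:ℕ)), Ne.symm (Fin.ne_of_val_ne (by omega : (z2:ℕ) ≠ (i1:ℕ))), Fin.ne_of_val_ne (by omega : (z2:ℕ) ≠ (i1:ℕ))]
      · simp [Prod.mk.injEq, mul_ite, mul_one, mul_zero, ite_and, Finset.sum_ite_eq',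
          Prod.mk.eta, v0, v1, h01, h10, ← e3]
      · simp [Prod.mk.injEq, mul_ite, mul_one, mul_zero, ite_and, Finset.sum_ite_eq',
          Prod.mk.eta, v0, v1, h01, h10, e4]
      · simp [Prod.mk.injEq, mul_ite, mul_one, mul_zero, ite_and, Finset.sum_ite_eq',
          Prod.mk.eta, v0, v1, h01, h10, ← e1, hz2,
          Ne.symm (Fin.ne_of_val_ne (by omega : (z2:ℕ) ≠ (i0:ℕ))), Fin.ne_of_val_ne (by omega : (z2:ℕ) ≠ (i0:ℕ)), Ne.symm (Fin.ne_of_val_ne (by omega : (z2:ℕ) ≠ (i1:ℕ))), Fin.ne_of_val_ne (by omega : (z2:ℕ) ≠ (i1:ℕ))]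
      · simp [Prod.mk.injEq, mul_ite, mul_one, mul_zero, ite_and, Finset.sum_ite_eq',
          Prod.mk.eta, v0, v1, h01, h10, ← e3, (by omega : 1 ≤ (z1:ℕ)),
          Ne.symm (Fin.ne_of_val_ne (by omega : (z1:ℕ) ≠ (i0:ℕ))), Fin.ne_of_val_ne (by omega : (z1:ℕ) ≠ (i0:ℕ)), Ne.symm (Fin.ne_of_val_ne (by omega : (z1:ℕ) ≠ (i1:ℕ))), Fin.ne_of_val_ne (by omega : (z1:ℕ) ≠ (i1:ℕ))]
      · simp [Prod.mk.injEq, mul_ite, mul_one, mul_zero, ite_and, Finset.sum_ite_eq',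
          Prod.mk.eta, v0, v1, h01, h10, ← e2, hz1,
          Ne.symm (Fin.ne_of_val_ne (by omega : (z1:ℕ) ≠ (i0:ℕ))), Fin.ne_of_val_ne (by omega : (z1:ℕ) ≠ (i0:ℕ)), Ne.symm (Fin.ne_of_val_ne (by omega : (z1:ℕ) ≠ (i1:ℕ))), Fin.ne_of_val_ne (by omega : (z1:ℕ) ≠ (i1:ℕ))]
      · simp [Prod.mk.injEq, mul_ite, mul_one, mul_zero, ite_and, Finset.sum_ite_eq',
          Prod.mk.eta, v0, v1, h01, h10, hz1, hz2,
          Ne.symm (Fin.ne_of_val_ne (by omega : (z1:ℕ) ≠ (i0:ℕ))), Fin.ne_of_val_ne (by omega : (z1:ℕ) ≠ (i0:ℕ)), Ne.symm (Fin.ne_of_val_ne (by omega : (z1:ℕ) ≠ (i1:ℕ))), Fin.ne_of_val_ne (by omega : (z1:ℕ) ≠ (i1:ℕ)),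
          Ne.symm (Fin.ne_of_val_ne (by omega : (z2:ℕ) ≠ (i0:ℕ))), Fin.ne_of_val_ne (by omega : (z2:ℕ) ≠ (i0:ℕ)), Ne.symm (Fin.ne_of_val_ne (by omega : (z2:ℕ) ≠ (i1:ℕ))), Fin.ne_of_val_ne (by omega : (z2:ℕ) ≠ (i1:ℕ))]
  rw [hxy]; exact hymem

lemma exists_good_basis {k : Type*} [Field k] {V : Type*} [AddCommGroup V] [Module k V]
    [FiniteDimensional k V] (m : ℕ) (hdim : Module.finrank k V = m + 2) (st : V)
    (α β : V →ₗ[k] k) (hα : α st = 1) (hβ : β st = 1) (hne : α ≠ β) :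
    ∃ p : Module.Basis (Fin (m + 2)) k V, st = ∑ i, p i ∧
      α = p.coord ⟨0, by omega⟩ ∧ β = p.coord ⟨1, by omega⟩ := by
  obtain ⟨z, hz⟩ : ∃ z, α z ≠ β z := by
    by_contra h; push_neg at h; exact hne (LinearMap.ext h)
  set d : k := β z - α z with hd
  have hd0 : d ≠ 0 := sub_ne_zero.mpr (Ne.symm hz)
  set e0 : V := d⁻¹ • (β z • st - z) with he0
  set e1 : V := d⁻¹ • (z - α z • st) with he1
  have hα0 : α e0 = 1 := by
    simp only [he0, map_smul, map_sub, hα, smul_eq_mul, mul_one]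
    rw [← hd, inv_mul_cancel₀ hd0]
  have hβ0 : β e0 = 0 := by
    simp only [he0, map_smul, map_sub, hβ, smul_eq_mul, mul_one, sub_self, mul_zero]
  have hα1 : α e1 = 0 := by
    simp only [he1, map_smul, map_sub, hα, smul_eq_mul, mul_one, sub_self, mul_zero]
  have hβ1 : β e1 = 1 := by
    simp only [he1, map_smul, map_sub, hβ, smul_eq_mul, mul_one]
    rw [← hd, inv_mul_cancel₀ hd0]
  set W : Submodule k V := LinearMap.ker (α.prod β) with hW
  have memW : ∀ v, v ∈ W ↔ α v = 0 ∧ β v = 0 := by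
    intro v
    simp [hW, LinearMap.mem_ker, LinearMap.prod_apply, Prod.ext_iff]
  have hsurj : LinearMap.range (α.prod β) = ⊤ := by
    rw [LinearMap.range_eq_top]
    rintro ⟨c1, c2⟩
    refine ⟨c1 • e0 + c2 • e1, ?_⟩
    simp [LinearMap.prod_apply, hα0, hβ0, hα1, hβ1, Prod.ext_iff]
  have hWrank : Module.finrank k W = m := by
    rw [hW]
    have h1 := LinearMap.finrank_range_add_finrank_ker (α.prod β)
    rw [hsurj] at h1
    rw [finrank_top] at h1
    have h2 : Module.finrank k (k × k) = 2 := by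
      simp [Module.finrank_prod]
    rw [h2, hdim] at h1
    omega
  let r : Module.Basis (Fin m) k W := Module.finBasisOfFinrankEq k W hWrank
  set rf : Fin m → V := fun i => (r i : V) with hrf
  have hrfW : ∀ i, rf i ∈ W := fun i => (r i).2
  set w : V := st - e0 - e1 with hwdef
  set u : V := w - ∑ i, rf i with hu
  have huW : u ∈ W := by
    refine Submodule.sub_mem _ ?_ (Submodule.sum_mem _ fun i _ => hrfW i)
    rw [memW]
    constructor
    · simp [hwdef, map_sub, hα, hα0, hα1]
    · simp [hwdef, map_sub, hβ, hβ0, hβ1]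
  set e0' : V := e0 + u with he0'
  have hα0' : α e0' = 1 := by
    rw [he0', map_add, hα0, ((memW u).mp huW).1, add_zero]
  have hβ0' : β e0' = 0 := by
    rw [he0', map_add, hβ0, ((memW u).mp huW).2, add_zero]
  set pf : Fin (m + 2) → V := Fin.cons e0' (Fin.cons e1 rf) with hpf
  have liR : LinearIndependent k rf := by
    have := r.linearIndependent.map' W.subtype (Submodule.ker_subtype W)
    exact this
  have spanR : Submodule.span k (Set.range rf) ≤ LinearMap.ker β := by
    rw [Submodule.span_le]
    rintro _ ⟨i, rfl⟩
    exact ((memW _).mp (hrfW i)).2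
  have li1 : LinearIndependent k (Fin.cons e1 rf : Fin (m+1) → V) := by
    rw [linearIndependent_fin_cons]
    refine ⟨liR, fun hmem => ?_⟩
    have := spanR hmem
    rw [LinearMap.mem_ker, hβ1] at this
    exact one_ne_zero this
  have span1 : Submodule.span k (Set.range (Fin.cons e1 rf : Fin (m+1) → V))
      ≤ LinearMap.ker α := by
    rw [Submodule.span_le, Fin.range_cons]
    rintro v (rfl | ⟨i, rfl⟩)
    · exact LinearMap.mem_ker.mpr hα1
    · exact LinearMap.mem_ker.mpr ((memW _).mp (hrfW _)).1
  have li : LinearIndependent k pf := by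
    rw [hpf, linearIndependent_fin_cons]
    refine ⟨li1, fun hmem => ?_⟩
    have := span1 hmem
    rw [LinearMap.mem_ker, hα0'] at this
    exact one_ne_zero this
  have hcard : Fintype.card (Fin (m + 2)) = Module.finrank k V := by
    simp [hdim]
  refine ⟨basisOfLinearIndependentOfCardEqFinrank li hcard, ?_, ?_, ?_⟩
  · rw [show ⇑(basisOfLinearIndependentOfCardEqFinrank li hcard) = pf from
      coe_basisOfLinearIndependentOfCardEqFinrank li hcard]
    rw [hpf, Fin.sum_univ_succ, Fin.sum_univ_succ]
    simp only [Fin.cons_zero, Fin.cons_succ]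
    rw [he0', hu, hwdef]
    abel
  · apply (basisOfLinearIndependentOfCardEqFinrank li hcard).ext
    intro i
    rw [Module.Basis.coord_apply, Module.Basis.repr_self, show ⇑(basisOfLinearIndependentOfCardEqFinrank li hcard) = pf from
      coe_basisOfLinearIndependentOfCardEqFinrank li hcard, Finsupp.single_apply]
    refine Fin.cases ?_ (fun j => Fin.cases ?_ (fun l => ?_) j) i <;>
      simp [hpf, hα0', hα1, Fin.ext_iff, ((memW _).mp (hrfW _)).1]
  · apply (basisOfLinearIndependentOfCardEqFinrank li hcard).ext
    intro i
    rw [Module.Basis.coord_apply, Module.Basis.repr_self, show ⇑(basisOfLinearIndependentOfCardEqFinrank li hcard) = pf from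
      coe_basisOfLinearIndependentOfCardEqFinrank li hcard, Finsupp.single_apply]
    refine Fin.cases ?_ (fun j => Fin.cases ?_ (fun l => ?_) j) i <;>
      simp [hpf, hβ0', hβ1, Fin.ext_iff, ((memW _).mp (hrfW _)).2]

/-- classification, case `α ≠ β`. Let `(P, γ, I, ⋆)` be a
braided ABQR operad with `dim P₂ = n`; `P₂ = V` below, `Λ` its space of quadratic
relations, and coherence of a unit action `(α, β)` expressed via the five
equations (C1)–(C5) of Theorem 4.1 (predicate `Coherent`).
(⇒) If `P` admits a coherent unit action `(α, β)` with `α ≠ β`, then there is a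
basis `{pᵢ}` of `P₂` with `⋆ = Σᵢ pᵢ` such that `Λ` is contained in the span of
the set `classSetNeq`. (⇐) Conversely, if `Λ` is contained in this span for some
such basis, then the unit action determined by `α = p.coord 0`, `β = p.coord 1`
(i.e. `α(p₁) = β(p₂) = 1` and vanishing on the other basis elements) is
coherent. -/
theorem classification_coherent_ne {k : Type*} [Field k] [CharZero k]
    {V : Type*} [AddCommGroup V] [Module k V] [FiniteDimensional k V]
    (n : ℕ) (hn : 2 ≤ n) (hdim : Module.finrank k V = n) (st : V)
    (Λ : Submodule k ((V ⊗[k] V) × (V ⊗[k] V))) :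
    ((∀ α β : V →ₗ[k] k, α st = 1 → β st = 1 → α ≠ β →
        (∀ x ∈ Λ, Coherent k V α β st x) →
        ∃ p : Module.Basis (Fin n) k V, st = ∑ i, p i ∧
          Λ ≤ Submodule.span k (classSetNeq k V hn st p)) ∧
     (∀ p : Module.Basis (Fin n) k V, st = ∑ i, p i →
        Λ ≤ Submodule.span k (classSetNeq k V hn st p) →
        ∀ x ∈ Λ,
          Coherent k V (p.coord ⟨0, by omega⟩) (p.coord ⟨1, by omega⟩) st x)) := by
  constructor
  · intro α β hα hβ hne hcoh
    obtain ⟨m, rfl⟩ : ∃ m, n = m + 2 := ⟨n - 2, by omega⟩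
    obtain ⟨p, hsum, hα', hβ'⟩ := exists_good_basis m hdim st α β hα hβ hne
    refine ⟨p, hsum, fun x hx => ?_⟩
    have hc := hcoh x hx
    rw [hα', hβ'] at hc
    exact mem_span_of_coherent k V hn st p hsum x hc
  · intro p hsum hspan x hx
    rw [coherent_iff_mem]
    exact Submodule.span_le.mpr
      (fun g hg => (coherent_iff_mem k V _ _ st g).mp
        (gens_coherent k V hn st p hsum g hg)) (hspan hx)
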